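/- Let t ↦ (x_t, y_t) be the unique solution of the ODE ż = B(z) on its maximal forward interval [0, 𝒯) with (x∘, y∘) ∈ S, suppose 𝒯 < ∞, and let x_- = min{x∘, x_∞} and ť = sup{ t < 𝒯 : x_t ≥ x_- /2 }. Then (x_t, y_t) ∈ L = (0, x_- /2) × (-∞, 0) for all t ∈ (ť, 𝒯), and consequently limsup_{t → 𝒯⁻} y_t ≤ 0. -/

import Mathlib

open Real Set Filter Topology

/-- The optimal-velocity function `V(x) = tanh(x-2) - tanh(-2)`. -/
noncomputable def V (x : ℝ) : ℝ := Real.tanh (x - 2) - Real.tanh (-2)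

/-- Inverse hyperbolic tangent. -/
noncomputable def artanh (v : ℝ) : ℝ := (1 / 2) * Real.log ((1 + v) / (1 - v))

/-- The equilibrium following distance `x_∞ = d (2 + artanh(v∘ + tanh(-2)))`. -/
noncomputable def xInf (d v₀ : ℝ) : ℝ := d * (2 + _root_.artanh (v₀ + Real.tanh (-2)))

/-- `IsSol α β d v₀ x y T` says that `t ↦ (x t, y t)` solves the ODE `ż = B(z)` on the
forward time interval `[0, T)`, staying in the state space `S = (0,∞) × ℝ`. -/
def IsSol (α β d v₀ : ℝ) (x y : ℝ → ℝ) (T : EReal) : Prop :=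
  ∀ t : ℝ, 0 ≤ t → (t : EReal) < T →
    0 < x t ∧ HasDerivAt x (y t) t ∧
      HasDerivAt y (-α * (V (x t / d) - v₀ + y t) - β * y t / (x t) ^ 2) t

/-- `[0, T)` is the maximal forward interval of definition. -/
def IsMaximal (α β d v₀ : ℝ) (x y : ℝ → ℝ) (T : EReal) : Prop :=
  ∀ (T' : EReal) (x' y' : ℝ → ℝ), T < T' → IsSol α β d v₀ x' y' T' →
    x' 0 = x 0 → y' 0 = y 0 → False

lemma tanh_eq (x : ℝ) : Real.tanh x = Real.sinh x / Real.cosh x := Real.tanh_eq_sinh_div_cosh x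

lemma contDiff_tanh {n : ℕ∞} : ContDiff ℝ n Real.tanh := by
  have : Real.tanh = fun x => Real.sinh x / Real.cosh x := funext tanh_eq
  rw [this]
  exact Real.contDiff_sinh.div Real.contDiff_cosh (fun x => (Real.cosh_pos x).ne')

lemma continuous_tanh : Continuous Real.tanh := contDiff_tanh (n := 0).continuous

lemma hasDerivAt_tanh (x : ℝ) : HasDerivAt Real.tanh (1 / Real.cosh x ^ 2) x := by
  have h : HasDerivAt (fun x => Real.sinh x / Real.cosh x)
      ((Real.cosh x * Real.cosh x - Real.sinh x * Real.sinh x) / Real.cosh x ^ 2) x :=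
    (Real.hasDerivAt_sinh x).div (Real.hasDerivAt_cosh x) (Real.cosh_pos x).ne'
  have e : Real.cosh x * Real.cosh x - Real.sinh x * Real.sinh x = 1 := by
    have := Real.cosh_sq x
    nlinarith
  have : HasDerivAt (fun x => Real.sinh x / Real.cosh x) (1 / Real.cosh x ^ 2) x := by
    rw [e] at h; exact h
  have e2 : Real.tanh = fun x => Real.sinh x / Real.cosh x := funext tanh_eq
  rw [e2]
  exact this

lemma tanh_strictMono : StrictMono Real.tanh := by
  apply strictMono_of_deriv_pos
  intro x
  rw [(hasDerivAt_tanh x).deriv]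
  positivity

lemma abs_tanh_lt_one (x : ℝ) : |Real.tanh x| < 1 := by
  rw [abs_lt, _root_.tanh_eq]
  constructor
  · rw [lt_div_iff₀ (Real.cosh_pos x)]
    have := Real.sinh_lt_cosh (-x)
    rw [Real.sinh_neg, Real.cosh_neg] at this
    linarith
  · rw [div_lt_one (Real.cosh_pos x)]
    exact Real.sinh_lt_cosh x

lemma tanh_artanh {v : ℝ} (h1 : -1 < v) (h2 : v < 1) : Real.tanh (_root_.artanh v) = v := by
  have h1' : 0 < 1 + v := by linarith
  have h2' : 0 < 1 - v := by linarith
  have hq : 0 < (1 + v) / (1 - v) := div_pos h1' h2'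
  have hexp : Real.exp (2 * _root_.artanh v) = (1 + v) / (1 - v) := by
    rw [_root_.artanh]
    rw [show 2 * ((1:ℝ)/2 * Real.log ((1 + v)/(1 - v))) = Real.log ((1+v)/(1-v)) by ring]
    exact Real.exp_log hq
  have hc := Real.cosh_pos (_root_.artanh v)
  rw [_root_.tanh_eq, Real.sinh_eq, Real.cosh_eq]
  have he : Real.exp (-_root_.artanh v) = Real.exp (_root_.artanh v) / Real.exp (2 * _root_.artanh v) := by
    rw [eq_div_iff (Real.exp_ne_zero _), ← Real.exp_add]; ring_nf
  rw [he, hexp]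
  have hepos := Real.exp_pos (_root_.artanh v)
  rw [div_eq_iff]
  · field_simp
    ring
  · positivity

lemma w_mem {v₀ : ℝ} (hv₀ : v₀ ∈ Set.Ioo 0 (1 + Real.tanh 2)) :
    -1 < v₀ + Real.tanh (-2) ∧ v₀ + Real.tanh (-2) < 1 := by
  obtain ⟨h0, h1⟩ := hv₀
  have ht := _root_.abs_tanh_lt_one (-2)
  rw [abs_lt] at ht
  rw [Real.tanh_neg] at *
  constructor <;> nlinarith [ht.1, ht.2]

lemma V_xInf {d v₀ : ℝ} (hd : 0 < d) (hv₀ : v₀ ∈ Set.Ioo 0 (1 + Real.tanh 2)) :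
    V (xInf d v₀ / d) = v₀ := by
  obtain ⟨hw1, hw2⟩ := w_mem hv₀
  rw [xInf, V]
  rw [mul_div_cancel_left₀ _ hd.ne']
  rw [show (2 : ℝ) + _root_.artanh (v₀ + Real.tanh (-2)) - 2 = _root_.artanh (v₀ + Real.tanh (-2)) by ring]
  rw [_root_.tanh_artanh hw1 hw2]
  ring

lemma V_lt_of_lt {d v₀ : ℝ} (hd : 0 < d) (hv₀ : v₀ ∈ Set.Ioo 0 (1 + Real.tanh 2))
    {ξ : ℝ} (h : ξ < xInf d v₀) : V (ξ / d) < v₀ := by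
  have := tanh_strictMono (show ξ / d - 2 < xInf d v₀ / d - 2 by gcongr)
  calc V (ξ / d) < V (xInf d v₀ / d) := by rw [V, V]; linarith
  _ = v₀ := V_xInf hd hv₀

lemma V_le_of_le {d v₀ : ℝ} (hd : 0 < d) (hv₀ : v₀ ∈ Set.Ioo 0 (1 + Real.tanh 2))
    {ξ : ℝ} (h : xInf d v₀ ≤ ξ) : v₀ ≤ V (ξ / d) := by
  rcases eq_or_lt_of_le h with rfl | h
  · exact (V_xInf hd hv₀).ge
  have := tanh_strictMono (show xInf d v₀ / d - 2 < ξ / d - 2 by gcongr)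
  calc v₀ = V (xInf d v₀ / d) := (V_xInf hd hv₀).symm
  _ ≤ V (ξ / d) := by rw [V, V]; linarith

lemma xInf_pos {d v₀ : ℝ} (hd : 0 < d) (hv₀ : v₀ ∈ Set.Ioo 0 (1 + Real.tanh 2)) :
    0 < xInf d v₀ := by
  obtain ⟨hw1, hw2⟩ := w_mem hv₀
  have h : -2 < _root_.artanh (v₀ + Real.tanh (-2)) := by
    by_contra h
    push_neg at h
    have := _root_.tanh_strictMono.monotone h
    rw [_root_.tanh_artanh hw1 hw2] at this
    obtain ⟨h0, _⟩ := hv₀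
    linarith
  rw [xInf]
  have : 0 < 2 + _root_.artanh (v₀ + Real.tanh (-2)) := by linarith
  positivity

lemma abs_V_le (u : ℝ) : |V u| ≤ 2 := by
  rw [V]
  have h1 := _root_.abs_tanh_lt_one (u - 2)
  have h2 := _root_.abs_tanh_lt_one (-2)
  rw [abs_lt] at h1 h2
  rw [abs_le]
  constructor <;> linarith [h1.1, h1.2, h2.1, h2.2]

lemma continuous_V : Continuous V := by
  unfold V
  exact (continuous_tanh.comp (continuous_id.sub continuous_const)).sub continuous_const

lemma contDiff_V {n : ℕ∞} : ContDiff ℝ n V := by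
  unfold V
  exact (contDiff_tanh.comp (contDiff_id.sub contDiff_const)).sub contDiff_const

noncomputable def Wfun (d v₀ : ℝ) (u : ℝ) : ℝ := ∫ ξ in (xInf d v₀)..u, (V (ξ / d) - v₀)

lemma continuous_Wintegrand (d v₀ : ℝ) : Continuous fun ξ : ℝ => V (ξ / d) - v₀ :=
  (continuous_V.comp (continuous_id.div_const d)).sub continuous_const

lemma hasDerivAt_Wfun (d v₀ u : ℝ) : HasDerivAt (Wfun d v₀) (V (u / d) - v₀) u := by
  exact intervalIntegral.integral_hasDerivAt_right
    ((continuous_Wintegrand d v₀).intervalIntegrable _ _)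
    ((continuous_Wintegrand d v₀).stronglyMeasurableAtFilter _ _)
    (continuous_Wintegrand d v₀).continuousAt

lemma Wfun_nonneg {d v₀ : ℝ} (hd : 0 < d) (hv₀ : v₀ ∈ Set.Ioo 0 (1 + Real.tanh 2))
    (u : ℝ) : 0 ≤ Wfun d v₀ u := by
  rcases le_total (xInf d v₀) u with h | h
  · apply intervalIntegral.integral_nonneg h
    intro ξ hξ
    have := V_le_of_le hd hv₀ hξ.1
    linarith
  · rw [Wfun, intervalIntegral.integral_symm]
    have h1 : 0 ≤ ∫ ξ in u..(xInf d v₀), (v₀ - V (ξ / d)) := by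
      apply intervalIntegral.integral_nonneg h
      intro ξ hξ
      rcases lt_or_eq_of_le hξ.2 with h2 | h2
      · have := V_lt_of_lt hd hv₀ h2
        linarith
      · rw [h2, V_xInf hd hv₀]; linarith
    have h2 : (∫ ξ in u..(xInf d v₀), (v₀ - V (ξ / d)))
        = -∫ ξ in u..(xInf d v₀), (V (ξ / d) - v₀) := by
      rw [← intervalIntegral.integral_neg]
      simp only [neg_sub]
    linarith

noncomputable def Bv (α β d v₀ : ℝ) (p : ℝ × ℝ) : ℝ × ℝ :=
  (p.2, -α * (V (p.1 / d) - v₀ + p.2) - β * p.2 / p.1 ^ 2)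

lemma contDiffAt_Bv {α β d v₀ : ℝ} {p : ℝ × ℝ} (hp : p.1 ≠ 0) :
    ContDiffAt ℝ 1 (Bv α β d v₀) p := by
  apply ContDiffAt.prodMk
  · exact contDiffAt_snd
  · apply ContDiffAt.sub
    · apply ContDiffAt.mul contDiffAt_const
      exact ((contDiff_V.contDiffAt.comp p (contDiffAt_fst.div_const d)).sub
        contDiffAt_const).add contDiffAt_snd
    · exact (contDiffAt_const.mul contDiffAt_snd).div (contDiffAt_fst.pow 2)
        (pow_ne_zero 2 hp)

lemma hasDerivAt_fst' {γ : ℝ → ℝ × ℝ} {D : ℝ × ℝ} {t : ℝ} (h : HasDerivAt γ D t) :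
    HasDerivAt (fun u => (γ u).1) D.1 t := by
  simpa using (h.hasFDerivAt.fst).hasDerivAt

lemma hasDerivAt_snd' {γ : ℝ → ℝ × ℝ} {D : ℝ × ℝ} {t : ℝ} (h : HasDerivAt γ D t) :
    HasDerivAt (fun u => (γ u).2) D.2 t := by
  simpa using (h.hasFDerivAt.snd).hasDerivAt

lemma stays_nonneg {α β d v₀ : ℝ} (hα : 0 < α) (hd : 0 < d)
    (hv₀ : v₀ ∈ Set.Ioo 0 (1 + Real.tanh 2))
    {x y : ℝ → ℝ} {T : ℝ}
    (hsol : ∀ t : ℝ, 0 ≤ t → t < T → 0 < x t ∧ HasDerivAt x (y t) t ∧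
      HasDerivAt y (-α * (V (x t / d) - v₀ + y t) - β * y t / (x t) ^ 2) t)
    {τ t : ℝ} (hτ : 0 ≤ τ) (ht : t < T) (hτt : τ ≤ t)
    (hx : ∀ s ∈ Set.Icc τ t, x s < xInf d v₀)
    (hyτ : 0 ≤ y τ) : 0 ≤ y t := by
  by_contra hyt
  push_neg at hyt
  set A := {v ∈ Set.Icc τ t | 0 ≤ y v} with hA
  have hτA : τ ∈ A := ⟨⟨le_refl τ, hτt⟩, hyτ⟩
  have hAne : A.Nonempty := ⟨τ, hτA⟩
  have hAbdd : BddAbove A := ⟨t, fun v hv => hv.1.2⟩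
  set s := sSup A with hs
  have hsmem : τ ≤ s := le_csSup hAbdd hτA
  have hst : s ≤ t := csSup_le hAne fun v hv => hv.1.2
  have hmem : ∀ v ∈ Set.Icc τ t, 0 ≤ v ∧ v < T := fun v hv =>
    ⟨hτ.trans hv.1, lt_of_le_of_lt hv.2 ht⟩
  have hycont : ∀ v ∈ Set.Icc τ t, ContinuousAt y v := fun v hv =>
    ((hsol v (hmem v hv).1 (hmem v hv).2).2.2).continuousAt
  have hys_nonneg : 0 ≤ y s := by
    by_contra hneg
    push_neg at hneg
    have hev : ∀ᶠ v in 𝓝 s, y v < 0 :=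
      (hycont s ⟨hsmem, hst⟩).tendsto.eventually_lt_const hneg
    obtain ⟨δ, hδ, hball⟩ := Metric.eventually_nhds_iff.mp hev
    obtain ⟨a, haA, ha⟩ := exists_lt_of_lt_csSup hAne (show s - δ < s by linarith)
    have haS : a ≤ s := le_csSup hAbdd haA
    have : dist a s < δ := by rw [Real.dist_eq, abs_lt]; constructor <;> linarith
    exact absurd haA.2 (not_le.mpr (hball this))
  have hst' : s < t :=
    lt_of_le_of_ne hst (fun h => by rw [h] at hys_nonneg; linarith)
  have hneg_on : ∀ v, s < v → v ≤ t → y v < 0 := by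
    intro v h1 h2
    by_contra h
    push_neg at h
    have hvA : v ∈ A := ⟨⟨hsmem.trans h1.le, h2⟩, h⟩
    have := le_csSup hAbdd hvA
    linarith
  have hys_le : y s ≤ 0 := by
    have hc : Filter.Tendsto y (𝓝[>] s) (𝓝 (y s)) :=
      (hycont s ⟨hsmem, hst⟩).tendsto.mono_left nhdsWithin_le_nhds
    have hle : ∀ᶠ v in 𝓝[>] s, y v ≤ 0 := by
      filter_upwards [Ioc_mem_nhdsGT_of_mem ⟨le_refl s, hst'⟩] with v hv
      exact (hneg_on v hv.1 hv.2).le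
    exact le_of_tendsto hc hle
  have hys : y s = 0 := le_antisymm hys_le hys_nonneg
  obtain ⟨hxs_pos, hxd, hyd⟩ := hsol s (hmem s ⟨hsmem, hst⟩).1 (hmem s ⟨hsmem, hst⟩).2
  have hVs := V_lt_of_lt hd hv₀ (hx s ⟨hsmem, hst⟩)
  have hD : 0 < -α * (V (x s / d) - v₀ + y s) - β * y s / (x s) ^ 2 := by
    rw [hys]
    rw [mul_zero, zero_div, add_zero, sub_zero]
    nlinarith
  have hslope := hasDerivAt_iff_tendsto_slope.mp hyd
  have h2 : Tendsto (slope y s) (𝓝[>] s)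
      (𝓝 (-α * (V (x s / d) - v₀ + y s) - β * y s / (x s) ^ 2)) :=
    hslope.mono_left (nhdsWithin_mono _ (fun v hv => ne_of_gt hv))
  have h3 : ∀ᶠ v in 𝓝[>] s, 0 < slope y s v := h2.eventually_const_lt hD
  have h4 : ∀ᶠ v in 𝓝[>] s, y v < 0 ∧ s < v := by
    filter_upwards [Ioc_mem_nhdsGT_of_mem ⟨le_refl s, hst'⟩, self_mem_nhdsWithin] with v hv hv2
    exact ⟨hneg_on v hv.1 hv.2, hv2⟩
  obtain ⟨v, hv1, hv2, hv3⟩ := (h3.and h4).exists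
  have : y v = slope y s v * (v - s) := by
    rw [slope_def_field, hys, sub_zero, div_mul_cancel₀ _ (sub_ne_zero.mpr (ne_of_gt hv3))]
  nlinarith [mul_pos hv1 (show (0:ℝ) < v - s by linarith)]

lemma tendsto_patch {f : ℝ → ℝ} {T L : ℝ} (h : Filter.Tendsto f (𝓝[<] T) (𝓝 L)) :
    Filter.Tendsto (fun t => if t < T then f t else L) (𝓝[<] T) (𝓝 L) := by
  apply h.congr'
  filter_upwards [self_mem_nhdsWithin] with u hu
  exact (if_pos (show u < T from hu)).symm

lemma continuousOn_patch {f : ℝ → ℝ} {T L t₀ : ℝ} (ht₀ : t₀ < T)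
    (hc : ∀ u, t₀ ≤ u → u < T → ContinuousAt f u)
    (h : Filter.Tendsto f (𝓝[<] T) (𝓝 L)) :
    ContinuousOn (fun t => if t < T then f t else L) (Set.Icc t₀ T) := by
  set g := fun t => if t < T then f t else L with hg
  intro u hu
  rcases lt_or_eq_of_le hu.2 with huT | rfl
  · apply ContinuousAt.continuousWithinAt
    apply (hc u hu.1 huT).congr
    filter_upwards [Iio_mem_nhds huT] with v hv
    exact (if_pos (show v < T from hv)).symm
  · rw [ContinuousWithinAt]
    have hgu : g u = L := by rw [hg]; simp
    rw [hgu]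
    have hsub : Set.Icc t₀ u ⊆ Set.Iio u ∪ {u} := by
      intro v hv
      rcases lt_or_eq_of_le hv.2 with h' | h'
      · exact Or.inl h'
      · exact Or.inr (by simp [h'])
    apply Filter.Tendsto.mono_left _ (nhdsWithin_mono u hsub)
    rw [nhdsWithin_union]
    rw [Filter.tendsto_sup]
    refine ⟨tendsto_patch h, ?_⟩
    rw [nhdsWithin_singleton]
    have := tendsto_pure_nhds g u
    rwa [hgu] at this

lemma eq_of_tendsto_eqOn {f g : ℝ → ℝ} {s : Set ℝ} {b : ℝ} {F : Filter ℝ} [F.NeBot]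
    (hF : F ≤ 𝓝[s] b) (hFs : ∀ᶠ v in F, f v = g v)
    (hf : ContinuousWithinAt f s b) (hg : ContinuousWithinAt g s b) : f b = g b := by
  have h1 : Filter.Tendsto f F (𝓝 (f b)) := hf.mono_left hF
  have h2 : Filter.Tendsto g F (𝓝 (g b)) := hg.mono_left hF
  exact tendsto_nhds_unique (h1.congr' hFs) h2

lemma hasDerivWithinAt_patch {f g : ℝ → ℝ} {T Lf Lg t₀ : ℝ} (ht₀ : t₀ < T)
    (hd : ∀ u, t₀ ≤ u → u < T → HasDerivAt f (g u) u)
    (hgc : ∀ u, t₀ ≤ u → u < T → ContinuousAt g u)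
    (hf : Filter.Tendsto f (𝓝[<] T) (𝓝 Lf))
    (hg : Filter.Tendsto g (𝓝[<] T) (𝓝 Lg)) :
    HasDerivWithinAt (fun t => if t < T then f t else Lf) Lg (Set.Iic T) T := by
  set fb := fun t => if t < T then f t else Lf with hfb
  set gb := fun t => if t < T then g t else Lg with hgb
  have hgbT : gb T = Lg := by rw [hgb]; simp
  have hfbT : fb T = Lf := by rw [hfb]; simp
  have hgc' : ContinuousOn gb (Set.Icc t₀ T) := continuousOn_patch ht₀ hgc hg
  have hfc' : ContinuousOn fb (Set.Icc t₀ T) :=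
    continuousOn_patch ht₀ (fun u h1 h2 => (hd u h1 h2).continuousAt) hf
  have hgOn : MeasureTheory.IntegrableOn gb (Set.Icc t₀ T) := hgc'.integrableOn_Icc
  have hint : IntervalIntegrable gb MeasureTheory.volume t₀ T := by
    apply MeasureTheory.IntegrableOn.intervalIntegrable
    rwa [Set.uIcc_of_le ht₀.le]
  set P := fun u => fb t₀ + ∫ s in t₀..u, gb s with hP
  have hPc : ContinuousOn P (Set.Icc t₀ T) := by
    apply continuousOn_const.add
    have := intervalIntegral.continuousOn_primitive_interval
      (by rwa [Set.uIcc_of_le ht₀.le] : MeasureTheory.IntegrableOn gb (Set.uIcc t₀ T))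
    rwa [Set.uIcc_of_le ht₀.le] at this
  have hrepIco : ∀ u ∈ Set.Ico t₀ T, fb u = P u := by
    intro u hu
    have h1 : (∫ s in t₀..u, gb s) = ∫ s in t₀..u, g s := by
      apply intervalIntegral.integral_congr
      intro s hs
      rw [Set.uIcc_of_le hu.1] at hs
      exact if_pos (lt_of_le_of_lt hs.2 hu.2)
    have h2 : (∫ s in t₀..u, g s) = f u - f t₀ := by
      apply intervalIntegral.integral_eq_sub_of_hasDerivAt
      · intro s hs
        rw [Set.uIcc_of_le hu.1] at hs
        exact hd s hs.1 (lt_of_le_of_lt hs.2 hu.2)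
      · apply ContinuousOn.intervalIntegrable
        apply continuousOn_of_forall_continuousAt
        intro s hs
        rw [Set.uIcc_of_le hu.1] at hs
        exact hgc s hs.1 (lt_of_le_of_lt hs.2 hu.2)
    have hfu : fb u = f u := if_pos hu.2
    have hft : fb t₀ = f t₀ := if_pos ht₀
    rw [hfu, hP]
    simp only []
    rw [hft, h1, h2]
    ring
  have hrepT : fb T = P T := by
    have hclo : closure (Set.Ioo t₀ T) = Set.Icc t₀ T := closure_Ioo ht₀.ne
    haveI hne : (𝓝[Set.Ioo t₀ T] T).NeBot := by
      rw [← mem_closure_iff_nhdsWithin_neBot, hclo]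
      exact ⟨ht₀.le, le_refl T⟩
    apply eq_of_tendsto_eqOn (s := Set.Icc t₀ T) (F := 𝓝[Set.Ioo t₀ T] T)
      (nhdsWithin_mono T Set.Ioo_subset_Icc_self)
      (by filter_upwards [self_mem_nhdsWithin] with v hv
          exact hrepIco v ⟨hv.1.le, hv.2⟩)
      (hfc' T ⟨ht₀.le, le_refl T⟩) (hPc T ⟨ht₀.le, le_refl T⟩)
  have hrep : Set.EqOn fb P (Set.Icc t₀ T) := by
    intro u hu
    rcases lt_or_eq_of_le hu.2 with h' | h'
    · exact hrepIco u ⟨hu.1, h'⟩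
    · rw [h']
      exact hrepT
  have hPd : HasDerivWithinAt P (gb T) (Set.Iic T) T := by
    apply HasDerivWithinAt.const_add
    exact intervalIntegral.integral_hasDerivWithinAt_right hint
      ⟨Set.Icc t₀ T, Icc_mem_nhdsLE_of_mem ⟨ht₀, le_refl T⟩,
        hgc'.aestronglyMeasurable measurableSet_Icc⟩
      ((hgc' T ⟨ht₀.le, le_refl T⟩).mono_of_mem_nhdsWithin (Icc_mem_nhdsLE_of_mem ⟨ht₀, le_refl T⟩))
  rw [← hgbT]
  have h1 : HasDerivWithinAt P (gb T) (Set.Icc t₀ T) T := hPd.mono Set.Icc_subset_Iic_self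
  have h2 : HasDerivWithinAt fb (gb T) (Set.Icc t₀ T) T := h1.congr hrep hrepT
  exact h2.mono_of_mem_nhdsWithin (Icc_mem_nhdsLE_of_mem ⟨ht₀, le_refl T⟩)

lemma no_positive_limit {α β d v₀ : ℝ} (hα : 0 < α) (hβ : 0 < β) (hd : 0 < d)
    (hv₀ : v₀ ∈ Set.Ioo 0 (1 + Real.tanh 2))
    {x y : ℝ → ℝ} {T : ℝ} (hT : 0 < T)
    (hsol : IsSol α β d v₀ x y (T : EReal))
    (hmax : IsMaximal α β d v₀ x y (T : EReal))
    {c₀ : ℝ} (hybdd : ∀ t, 0 ≤ t → t < T → |y t| ≤ c₀)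
    {XT : ℝ} (hXT : Filter.Tendsto x (𝓝[<] T) (𝓝 XT))
    (hXTpos : 0 < XT) : False := by
  have hsolR : ∀ t : ℝ, 0 ≤ t → t < T → 0 < x t ∧ HasDerivAt x (y t) t ∧
      HasDerivAt y (-α * (V (x t / d) - v₀ + y t) - β * y t / (x t) ^ 2) t :=
    fun t h1 h2 => hsol t h1 (EReal.coe_lt_coe_iff.mpr h2)
  have hc₀ : 0 ≤ c₀ := le_trans (abs_nonneg _) (hybdd 0 le_rfl hT)
  -- step 1 : choose t₀
  have hev : ∀ᶠ t in 𝓝[<] T, XT / 2 < x t := hXT.eventually_const_lt (by linarith)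
  obtain ⟨a, haT, hab⟩ := mem_nhdsLT_iff_exists_Ioo_subset.mp hev
  set t₀ : ℝ := max ((a + T) / 2) 0 with ht₀def
  have haT' : a < T := haT
  have ht₀T : t₀ < T := by
    rw [ht₀def]
    apply max_lt _ hT
    linarith
  have ht₀0 : 0 ≤ t₀ := le_max_right _ _
  have hxlow : ∀ u, t₀ ≤ u → u < T → XT / 2 < x u := by
    intro u h1 h2
    apply hab
    constructor
    · calc a < (a + T) / 2 := by linarith
      _ ≤ t₀ := le_max_left _ _
      _ ≤ u := h1
    · exact h2
  -- step 2 : bound on y'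
  set G : ℝ → ℝ := fun t => -α * (V (x t / d) - v₀ + y t) - β * y t / (x t) ^ 2 with hG
  set M : ℝ := α * (2 + |v₀| + c₀) + β * c₀ / (XT / 2) ^ 2 with hM
  have hMnonneg : 0 ≤ M := by
    rw [hM]
    positivity
  have hGbdd : ∀ u, t₀ ≤ u → u < T → |G u| ≤ M := by
    intro u h1 h2
    obtain ⟨hxp, hxd, hyd⟩ := hsolR u (ht₀0.trans h1) h2
    have hy := hybdd u (ht₀0.trans h1) h2
    have hVb := abs_V_le (x u / d)
    have hxl := hxlow u h1 h2
    rw [hG]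
    have e1 : |(-α) * (V (x u / d) - v₀ + y u)| ≤ α * (2 + |v₀| + c₀) := by
      rw [abs_mul, abs_neg, abs_of_pos hα]
      apply mul_le_mul_of_nonneg_left _ hα.le
      calc |V (x u / d) - v₀ + y u| ≤ |V (x u / d)| + |v₀| + |y u| := by
            calc |V (x u / d) - v₀ + y u| ≤ |V (x u / d) - v₀| + |y u| := abs_add_le _ _
            _ ≤ |V (x u / d)| + |v₀| + |y u| := by
                have := abs_sub (V (x u / d)) v₀
                linarith [abs_sub_abs_le_abs_sub (V (x u / d)) v₀, abs_sub (V (x u / d)) v₀]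
      _ ≤ 2 + |v₀| + c₀ := by linarith
    have e2 : |β * y u / (x u) ^ 2| ≤ β * c₀ / (XT / 2) ^ 2 := by
      rw [abs_div, abs_mul, abs_of_pos hβ, abs_of_pos (pow_pos hxp 2)]
      apply div_le_div₀ (by positivity) (by nlinarith) (by positivity)
      nlinarith
    calc |(-α) * (V (x u / d) - v₀ + y u) - β * y u / (x u) ^ 2|
        ≤ |(-α) * (V (x u / d) - v₀ + y u)| + |β * y u / (x u) ^ 2| := abs_sub _ _
    _ ≤ M := by rw [hM]; linarith
  -- step 3 : y is Lipschitz on Ico t₀ T, hence has a limit YT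
  have hylip : LipschitzOnWith (Real.toNNReal M) y (Set.Ico t₀ T) := by
    rw [lipschitzOnWith_iff_dist_le_mul]
    intro s hs u hu
    rw [Real.dist_eq, Real.dist_eq]
    have key := Convex.norm_image_sub_le_of_norm_hasDerivWithin_le
      (f := y) (f' := G) (C := M) (s := Set.Ico t₀ T)
      (fun v hv => ((hsolR v (ht₀0.trans hv.1) hv.2).2.2).hasDerivWithinAt)
      (fun v hv => by
        rw [Real.norm_eq_abs]
        exact hGbdd v hv.1 hv.2)
      (convex_Ico t₀ T) hu hs
    rw [Real.norm_eq_abs, Real.norm_eq_abs] at key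
    calc |y s - y u| ≤ M * |s - u| := key
    _ ≤ Real.toNNReal M * |s - u| := by
        apply mul_le_mul_of_nonneg_right _ (abs_nonneg _)
        exact le_max_left _ _
  obtain ⟨gy, hgyl, hgyeq⟩ := hylip.extend_real
  set YT := gy T with hYT
  have htendy : Filter.Tendsto y (𝓝[<] T) (𝓝 YT) := by
    have h1 : Filter.Tendsto gy (𝓝[<] T) (𝓝 YT) :=
      (hgyl.continuous.tendsto T).mono_left nhdsWithin_le_nhds
    apply h1.congr'
    filter_upwards [Ioo_mem_nhdsLT_of_mem (Set.mem_Ioc.mpr ⟨ht₀T, le_refl T⟩)] with v hv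
    exact (hgyeq ⟨hv.1.le, hv.2⟩).symm
  -- step 4 : patched functions and derivatives at T
  have hGcont : ∀ u, 0 ≤ u → u < T → ContinuousAt G u := by
    intro u h1 h2
    obtain ⟨hxp, hxd, hyd⟩ := hsolR u h1 h2
    have hB : ContinuousAt (Bv α β d v₀) (x u, y u) :=
      (contDiffAt_Bv (by simpa using hxp.ne')).continuousAt
    have hpair : ContinuousAt (fun t => (x t, y t)) u :=
      hxd.continuousAt.prodMk hyd.continuousAt
    have h1 : ContinuousAt (fun t => Bv α β d v₀ (x t, y t)) u :=
      ContinuousAt.comp (f := fun t => (x t, y t)) hB hpair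
    have h2 : ContinuousAt (fun t => (Bv α β d v₀ (x t, y t)).2) u :=
      continuous_snd.continuousAt.comp h1
    have hGeq : G = fun t => (Bv α β d v₀ (x t, y t)).2 := by
      funext t
      rw [hG, Bv]
    rw [hGeq]
    exact h2
  set p : ℝ × ℝ := (XT, YT) with hp
  have hpne : p.1 ≠ 0 := by simpa [hp] using hXTpos.ne'
  set GT : ℝ := (Bv α β d v₀ p).2 with hGT
  have hGtend : Filter.Tendsto G (𝓝[<] T) (𝓝 GT) := by
    have hpair : Filter.Tendsto (fun t => (x t, y t)) (𝓝[<] T) (𝓝 p) :=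
      hXT.prodMk_nhds htendy
    have hB : ContinuousAt (Bv α β d v₀) p := (contDiffAt_Bv hpne).continuousAt
    exact (continuous_snd.continuousAt.tendsto.comp (hB.tendsto.comp hpair) : _)
  set xb := fun t => if t < T then x t else XT with hxb
  set yb := fun t => if t < T then y t else YT with hyb
  set zb := fun t => (xb t, yb t) with hzb
  have hzbT : zb T = p := by
    rw [hzb, hxb, hyb, hp]
    simp
  have hxbd : HasDerivWithinAt xb YT (Set.Iic T) T :=
    hasDerivWithinAt_patch ht₀T (fun u h1 h2 => (hsolR u (ht₀0.trans h1) h2).2.1)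
      (fun u h1 h2 => ((hsolR u (ht₀0.trans h1) h2).2.2).continuousAt) hXT htendy
  have hybd : HasDerivWithinAt yb GT (Set.Iic T) T :=
    hasDerivWithinAt_patch ht₀T (fun u h1 h2 => (hsolR u (ht₀0.trans h1) h2).2.2)
      (fun u h1 h2 => hGcont u (ht₀0.trans h1) h2) htendy hGtend
  have hxbc : ContinuousOn xb (Set.Icc t₀ T) :=
    continuousOn_patch ht₀T
      (fun u h1 h2 => ((hsolR u (ht₀0.trans h1) h2).2.1).continuousAt) hXT
  have hybc : ContinuousOn yb (Set.Icc t₀ T) :=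
    continuousOn_patch ht₀T
      (fun u h1 h2 => ((hsolR u (ht₀0.trans h1) h2).2.2).continuousAt) htendy
  have hzbc : ContinuousOn zb (Set.Icc t₀ T) := hxbc.prodMk hybc
  -- step 5 : local solution via Picard-Lindelof
  obtain ⟨γ, hγT, ε, hε, hγ⟩ :=
    (contDiffAt_Bv hpne).exists_forall_mem_closedBall_exists_eq_forall_mem_Ioo_hasDerivAt₀ T
  have hγcT : ContinuousAt γ T :=
    (hγ T (by constructor <;> linarith)).continuousAt
  obtain ⟨K, s, hs, hlip⟩ := (contDiffAt_Bv hpne).exists_lipschitzOnWith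
  -- step 6 : choose σ
  have hzs : ∀ᶠ u in 𝓝[Set.Icc t₀ T] T, zb u ∈ s := by
    have h1 : Filter.Tendsto zb (𝓝[Set.Icc t₀ T] T) (𝓝 p) := by
      have := hzbc T ⟨ht₀T.le, le_refl T⟩
      rwa [ContinuousWithinAt, hzbT] at this
    exact h1.eventually hs
  obtain ⟨δ1, hδ1, hball1⟩ := Metric.mem_nhdsWithin_iff.mp hzs
  have hγs : ∀ᶠ u in 𝓝 T, γ u ∈ s := by
    have h1 : Filter.Tendsto γ (𝓝 T) (𝓝 p) := by
      have := hγcT.tendsto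
      rwa [hγT] at this
    exact h1.eventually hs
  obtain ⟨δ2, hδ2, hball2⟩ := Metric.eventually_nhds_iff.mp hγs
  have hγpos : ∀ᶠ u in 𝓝 T, 0 < (γ u).1 := by
    have h1 : Filter.Tendsto (fun u => (γ u).1) (𝓝 T) (𝓝 XT) := by
      have := continuous_fst.continuousAt.tendsto.comp hγcT.tendsto
      rwa [hγT] at this
    exact h1.eventually_const_lt hXTpos
  obtain ⟨δ4, hδ4, hball4⟩ := Metric.eventually_nhds_iff.mp hγpos
  set δm : ℝ := min δ1 (min δ2 (min ε δ4)) with hδm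
  have hδmpos : 0 < δm := by
    rw [hδm]
    exact lt_min hδ1 (lt_min hδ2 (lt_min hε hδ4))
  have hδm1 : δm ≤ δ1 := min_le_left _ _
  have hδm2 : δm ≤ δ2 := (min_le_right _ _).trans (min_le_left _ _)
  have hδmε : δm ≤ ε := ((min_le_right _ _).trans (min_le_right _ _)).trans (min_le_left _ _)
  have hδm4 : δm ≤ δ4 := ((min_le_right _ _).trans (min_le_right _ _)).trans (min_le_right _ _)
  set σ : ℝ := max (T - δm / 2) ((t₀ + T) / 2) with hσ
  have hσT : σ < T := by
    rw [hσ]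
    apply max_lt (by linarith) (by linarith)
  have ht₀σ : t₀ ≤ σ := by
    rw [hσ]
    calc t₀ ≤ (t₀ + T) / 2 := by linarith
    _ ≤ _ := le_max_right _ _
  have hTσ : T - σ ≤ δm / 2 := by
    rw [hσ]
    have := le_max_left (T - δm / 2) ((t₀ + T) / 2)
    linarith
  have hdistσ : ∀ u ∈ Set.Icc σ T, dist u T < δm := by
    intro u hu
    rw [Real.dist_eq, abs_lt]
    constructor <;> [linarith [hu.1]; linarith [hu.2]]
  have hmemz : ∀ u ∈ Set.Icc σ T, zb u ∈ s := by
    intro u hu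
    apply hball1
    exact ⟨Metric.mem_ball.mpr (lt_of_lt_of_le (hdistσ u hu) hδm1),
      ⟨ht₀σ.trans hu.1, hu.2⟩⟩
  have hmemγ : ∀ u ∈ Set.Icc σ T, γ u ∈ s := fun u hu =>
    hball2 (lt_of_lt_of_le (hdistσ u hu) hδm2)
  have hIooε : ∀ u ∈ Set.Icc σ T, u ∈ Set.Ioo (T - ε) (T + ε) := by
    intro u hu
    have := hdistσ u hu
    rw [Real.dist_eq, abs_lt] at this
    constructor <;> [linarith [this.2, hδmε]; linarith [this.1, hδmε]]
  -- step 7 : derivative of zb within Iic on Ioc σ T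
  have hzbdiff : ∀ t ∈ Set.Ioc σ T,
      HasDerivWithinAt zb (Bv α β d v₀ (zb t)) (Set.Iic t) t := by
    intro t ht
    rcases lt_or_eq_of_le ht.2 with h' | h'
    · obtain ⟨hxp, hxd, hyd⟩ := hsolR t (ht₀0.trans (ht₀σ.trans ht.1.le)) h'
      have hxeq : xb =ᶠ[𝓝 t] x := by
        filter_upwards [Iio_mem_nhds h'] with v hv
        exact if_pos (show v < T from hv)
      have hyeq : yb =ᶠ[𝓝 t] y := by
        filter_upwards [Iio_mem_nhds h'] with v hv
        exact if_pos (show v < T from hv)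
      have hd1 : HasDerivAt xb (y t) t := hxd.congr_of_eventuallyEq hxeq
      have hd2 : HasDerivAt yb (G t) t := hyd.congr_of_eventuallyEq hyeq
      have hzt : zb t = (x t, y t) := by
        rw [hzb, hxb, hyb]
        simp only [if_pos h']
      rw [hzt]
      exact ((hd1.prodMk hd2).hasDerivWithinAt : _)
    · subst h'
      rw [hzbT]
      exact (hxbd.prodMk hybd : _)
  -- step 8 : uniqueness
  have hγcont : ContinuousOn γ (Set.Icc σ T) :=
    continuousOn_of_forall_continuousAt fun u hu => (hγ u (hIooε u hu)).continuousAt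
  have hEq : Set.EqOn zb γ (Set.Icc σ T) := by
    have hzc' : ContinuousOn zb (Set.Icc σ T) := hzbc.mono (Set.Icc_subset_Icc_left ht₀σ)
    have hzd' : ∀ t ∈ Set.Ioc σ T,
        HasDerivWithinAt zb ((fun (_ : ℝ) (z : ℝ × ℝ) => Bv α β d v₀ z) t (zb t))
          (Set.Iic t) t := hzbdiff
    have hγd' : ∀ t ∈ Set.Ioc σ T,
        HasDerivWithinAt γ ((fun (_ : ℝ) (z : ℝ × ℝ) => Bv α β d v₀ z) t (γ t))
          (Set.Iic t) t :=
      fun t ht => (hγ t (hIooε t (Set.Ioc_subset_Icc_self ht))).hasDerivWithinAt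
    exact ODE_solution_unique_of_mem_Icc_left
      (v := fun (_ : ℝ) (z : ℝ × ℝ) => Bv α β d v₀ z) (s := fun _ => s) (K := K)
      (fun _ _ => hlip) hzc' hzd'
      (fun t ht => hmemz t (Set.Ioc_subset_Icc_self ht)) hγcont hγd'
      (fun t ht => hmemγ t (Set.Ioc_subset_Icc_self ht))
      (by rw [hzbT, hγT])
  -- step 9 : gluing
  set δ3 : ℝ := min (ε / 2) (δ4 / 2) with hδ3
  have hδ3pos : 0 < δ3 := lt_min (by linarith) (by linarith)
  have hδ3ε : δ3 ≤ ε / 2 := min_le_left _ _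
  have hδ3δ4 : δ3 ≤ δ4 / 2 := min_le_right _ _
  have hγpos' : ∀ u, T ≤ u → u ≤ T + δ3 → 0 < (γ u).1 := by
    intro u h1 h2
    apply hball4
    rw [Real.dist_eq, abs_lt]
    constructor <;> linarith
  set x' := fun t => if t < T then x t else (γ t).1 with hx'
  set y' := fun t => if t < T then y t else (γ t).2 with hy'
  have hagree : ∀ u, σ < u → x' u = (γ u).1 ∧ y' u = (γ u).2 := by
    intro u h1
    rcases lt_or_ge u T with h2 | h2
    · have := hEq (Set.mem_Icc.mpr ⟨h1.le, h2.le⟩)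
      rw [hzb, hxb, hyb] at this
      simp only [if_pos h2] at this
      rw [hx', hy']
      simp only [if_pos h2]
      exact ⟨congrArg Prod.fst this, congrArg Prod.snd this⟩
    · exact ⟨if_neg (not_lt.mpr h2), if_neg (not_lt.mpr h2)⟩
  have hsol' : IsSol α β d v₀ x' y' ((T + δ3 : ℝ) : EReal) := by
    intro t ht0 htlt
    replace htlt : t < T + δ3 := EReal.coe_lt_coe_iff.mp htlt
    rcases lt_or_ge t T with h' | h'
    · obtain ⟨hxp, hxd, hyd⟩ := hsolR t ht0 h'
      have hxeq : x' =ᶠ[𝓝 t] x := by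
        filter_upwards [Iio_mem_nhds h'] with v hv
        exact if_pos (show v < T from hv)
      have hyeq : y' =ᶠ[𝓝 t] y := by
        filter_upwards [Iio_mem_nhds h'] with v hv
        exact if_pos (show v < T from hv)
      have hxt : x' t = x t := if_pos h'
      have hyt : y' t = y t := if_pos h'
      refine ⟨by rw [hxt]; exact hxp, ?_, ?_⟩
      · rw [hyt]
        exact hxd.congr_of_eventuallyEq hxeq
      · rw [hxt, hyt]
        exact hyd.congr_of_eventuallyEq hyeq
    · have htIoo : t ∈ Set.Ioo (T - ε) (T + ε) := by
        constructor <;> [linarith; linarith [hδ3ε]]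
      have hγd := hγ t htIoo
      have hloc : ∀ᶠ u in 𝓝 t, σ < u := by
        filter_upwards [Ioi_mem_nhds (lt_of_lt_of_le hσT h')] with v hv
        exact hv
      have hxeq : x' =ᶠ[𝓝 t] fun u => (γ u).1 := by
        filter_upwards [hloc] with v hv
        exact (hagree v hv).1
      have hyeq : y' =ᶠ[𝓝 t] fun u => (γ u).2 := by
        filter_upwards [hloc] with v hv
        exact (hagree v hv).2
      have hxt : x' t = (γ t).1 := (hagree t (lt_of_lt_of_le hσT h')).1
      have hyt : y' t = (γ t).2 := (hagree t (lt_of_lt_of_le hσT h')).2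
      refine ⟨?_, ?_, ?_⟩
      · rw [hxt]
        exact hγpos' t h' (by linarith)
      · rw [hyt]
        exact (hasDerivAt_fst' hγd).congr_of_eventuallyEq hxeq
      · rw [hxt, hyt]
        exact (hasDerivAt_snd' hγd).congr_of_eventuallyEq hyeq
  exact hmax ((T + δ3 : ℝ) : EReal) x' y'
    (EReal.coe_lt_coe_iff.mpr (by linarith)) hsol' (if_pos hT) (if_pos hT)

set_option maxHeartbeats 1000000 in
/-- with `𝒯 < ∞`, `x₋ = min{x∘, x_∞}` and
`ť = sup{ t < 𝒯 : x_t ≥ x₋ / 2 }`, the solution lies in `L = (0, x₋ / 2) × (-∞, 0)` for all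
`t ∈ (ť, 𝒯)`, and consequently `limsup_{t → 𝒯⁻} y_t ≤ 0`. -/
theorem solution_in_lower_region (α β d v₀ : ℝ)
    (hα : 0 < α) (hβ : 0 < β) (hd : 0 < d)
    (hv₀ : v₀ ∈ Set.Ioo 0 (1 + Real.tanh 2))
    (x y : ℝ → ℝ) (T : ℝ) (hT : 0 < T)
    (x₀ y₀ : ℝ) (hx₀ : 0 < x₀) (hinit : x 0 = x₀ ∧ y 0 = y₀)
    (hsol : IsSol α β d v₀ x y (T : EReal))
    (hmax : IsMaximal α β d v₀ x y (T : EReal))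
    (xm : ℝ) (hxm : xm = min x₀ (xInf d v₀))
    (tc : ℝ) (htc : tc = sSup {t : ℝ | 0 ≤ t ∧ t < T ∧ xm / 2 ≤ x t}) :
    (∀ t : ℝ, tc < t → t < T → 0 < x t ∧ x t < xm / 2 ∧ y t < 0) ∧
    Filter.limsup y (nhdsWithin T (Set.Iio T)) ≤ 0 := by
  obtain ⟨hx0, hy0⟩ := hinit
  have hsolR : ∀ t : ℝ, 0 ≤ t → t < T → 0 < x t ∧ HasDerivAt x (y t) t ∧
      HasDerivAt y (-α * (V (x t / d) - v₀ + y t) - β * y t / (x t) ^ 2) t :=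
    fun t h1 h2 => hsol t h1 (EReal.coe_lt_coe_iff.mpr h2)
  have hxInf : 0 < xInf d v₀ := xInf_pos hd hv₀
  have hxm_pos : 0 < xm := by rw [hxm]; exact lt_min hx₀ hxInf
  have hxm_le : xm ≤ xInf d v₀ := by rw [hxm]; exact min_le_right _ _
  have hxm_le' : xm ≤ x₀ := by rw [hxm]; exact min_le_left _ _
  -- the energy function
  set E : ℝ → ℝ := fun t => (y t) ^ 2 / 2 + α * Wfun d v₀ (x t) with hE
  have hEd : ∀ t, 0 ≤ t → t < T →
      HasDerivAt E (-(α + β / (x t) ^ 2) * (y t) ^ 2) t := by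
    intro t h1 h2
    obtain ⟨hxp, hxd, hyd⟩ := hsolR t h1 h2
    have h3 : HasDerivAt (fun s => (y s) ^ 2 / 2)
        ((2 * y t ^ 1 * (-α * (V (x t / d) - v₀ + y t) - β * y t / (x t) ^ 2)) / 2) t :=
      (hyd.pow 2).div_const 2
    have h4 : HasDerivAt (fun s => Wfun d v₀ (x s)) ((V (x t / d) - v₀) * y t) t :=
      (hasDerivAt_Wfun d v₀ (x t)).comp t hxd
    have h5 := h3.add (h4.const_mul α)
    refine h5.congr_deriv ?_
    have hxne : (x t) ^ 2 ≠ 0 := (pow_pos hxp 2).ne'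
    ring
  have hEcont : ∀ t, 0 ≤ t → t < T → ContinuousAt E t := fun t h1 h2 =>
    (hEd t h1 h2).continuousAt
  have hEmono : ∀ s u, 0 ≤ s → s ≤ u → u < T → E u ≤ E s := by
    intro s u h1 h2 h3
    rcases eq_or_lt_of_le h2 with rfl | h2'
    · exact le_refl _
    have hanti : AntitoneOn E (Set.Icc s u) := by
      apply antitoneOn_of_deriv_nonpos (convex_Icc s u)
      · intro v hv
        exact (hEcont v (h1.trans hv.1) (lt_of_le_of_lt hv.2 h3)).continuousWithinAt
      · intro v hv
        rw [interior_Icc] at hv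
        exact (hEd v (h1.trans hv.1.le) (lt_trans hv.2 h3)).differentiableAt.differentiableWithinAt
      · intro v hv
        rw [interior_Icc] at hv
        rw [(hEd v (h1.trans hv.1.le) (lt_trans hv.2 h3)).deriv]
        have hxp := (hsolR v (h1.trans hv.1.le) (lt_trans hv.2 h3)).1
        have hpos : 0 ≤ (α + β / (x v) ^ 2) * (y v) ^ 2 := by positivity
        linarith
    exact hanti (Set.mem_Icc.mpr ⟨le_refl s, h2⟩) (Set.mem_Icc.mpr ⟨h2, le_refl u⟩) h2
  have hW : ∀ u : ℝ, 0 ≤ Wfun d v₀ u := Wfun_nonneg hd hv₀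
  set c₀ : ℝ := Real.sqrt (2 * E 0) with hc₀
  have hc₀nn : 0 ≤ c₀ := Real.sqrt_nonneg _
  have hybdd : ∀ t, 0 ≤ t → t < T → |y t| ≤ c₀ := by
    intro t h1 h2
    have h3 : (y t) ^ 2 ≤ 2 * E t := by
      have := hW (x t)
      rw [hE]
      nlinarith
    have h4 : E t ≤ E 0 := hEmono 0 t le_rfl h1 h2
    calc |y t| = Real.sqrt ((y t) ^ 2) := (Real.sqrt_sq_eq_abs _).symm
    _ ≤ c₀ := by
        rw [hc₀]
        apply Real.sqrt_le_sqrt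
        linarith
  -- x is Lipschitz, hence has a limit XT at T
  have hxlip : LipschitzOnWith (Real.toNNReal c₀) x (Set.Ico 0 T) := by
    rw [lipschitzOnWith_iff_dist_le_mul]
    intro s hs u hu
    rw [Real.dist_eq, Real.dist_eq]
    have key := Convex.norm_image_sub_le_of_norm_hasDerivWithin_le
      (f := x) (f' := y) (C := c₀) (s := Set.Ico 0 T)
      (fun v hv => ((hsolR v hv.1 hv.2).2.1).hasDerivWithinAt)
      (fun v hv => by rw [Real.norm_eq_abs]; exact hybdd v hv.1 hv.2)
      (convex_Ico 0 T) hu hs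
    rw [Real.norm_eq_abs, Real.norm_eq_abs] at key
    calc |x s - x u| ≤ c₀ * |s - u| := key
    _ ≤ Real.toNNReal c₀ * |s - u| :=
        mul_le_mul_of_nonneg_right (le_max_left _ _) (abs_nonneg _)
  obtain ⟨gx, hgxl, hgxeq⟩ := hxlip.extend_real
  set XT := gx T with hXTdef
  have htendx : Filter.Tendsto x (𝓝[<] T) (𝓝 XT) := by
    have h1 : Filter.Tendsto gx (𝓝[<] T) (𝓝 XT) :=
      (hgxl.continuous.tendsto T).mono_left nhdsWithin_le_nhds
    apply h1.congr'
    filter_upwards [Ioo_mem_nhdsLT_of_mem (Set.mem_Ioc.mpr ⟨hT, le_refl T⟩)] with v hv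
    exact (hgxeq ⟨hv.1.le, hv.2⟩).symm
  have hXTnonneg : 0 ≤ XT := by
    apply ge_of_tendsto htendx
    filter_upwards [Ioo_mem_nhdsLT_of_mem (Set.mem_Ioc.mpr ⟨hT, le_refl T⟩)] with v hv
    exact (hsolR v hv.1.le hv.2).1.le
  have hXT0 : XT = 0 := by
    by_contra h
    exact no_positive_limit hα hβ hd hv₀ hT hsol hmax hybdd htendx
      (lt_of_le_of_ne hXTnonneg (Ne.symm h))
  rw [hXT0] at htendx
  -- the set S and tc
  set S : Set ℝ := {t : ℝ | 0 ≤ t ∧ t < T ∧ xm / 2 ≤ x t} with hS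
  have h0S : (0 : ℝ) ∈ S := ⟨le_rfl, hT, by rw [hx0]; linarith⟩
  have hSbdd : BddAbove S := ⟨T, fun t ht => ht.2.1.le⟩
  have htc0 : 0 ≤ tc := by rw [htc]; exact le_csSup hSbdd h0S
  have htcT : tc < T := by
    have hev : ∀ᶠ u in 𝓝[<] T, x u < xm / 2 :=
      htendx.eventually_lt_const (by linarith)
    obtain ⟨a, haT, hab⟩ := mem_nhdsLT_iff_exists_Ioo_subset.mp hev
    have haT' : a < T := haT
    have hSle : ∀ t ∈ S, t ≤ max a 0 := by
      intro t ht
      by_contra hcon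
      push_neg at hcon
      have h1 : a < t := lt_of_le_of_lt (le_max_left a 0) hcon
      have := hab ⟨h1, ht.2.1⟩
      exact absurd ht.2.2 (not_le.mpr this)
    have : tc ≤ max a 0 := by
      rw [htc]
      exact csSup_le ⟨0, h0S⟩ hSle
    calc tc ≤ max a 0 := this
    _ < T := max_lt haT' hT
  -- main conclusion for t ∈ (tc, T)
  have hmain : ∀ t : ℝ, tc < t → t < T → 0 < x t ∧ x t < xm / 2 ∧ y t < 0 := by
    intro t h1 h2
    have ht0 : 0 ≤ t := htc0.trans h1.le
    have hxpos : 0 < x t := (hsolR t ht0 h2).1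
    have hxlt : x t < xm / 2 := by
      by_contra hcon
      push_neg at hcon
      have : t ∈ S := ⟨ht0, h2, hcon⟩
      have := le_csSup hSbdd this
      rw [← htc] at this
      linarith
    refine ⟨hxpos, hxlt, ?_⟩
    by_contra hycon
    push_neg at hycon
    -- then y stays nonnegative and x is nondecreasing on [t, T), contradicting XT = 0
    have hxsmall : ∀ s, t ≤ s → s < T → x s < xInf d v₀ := by
      intro s hs1 hs2
      rcases eq_or_lt_of_le hs1 with rfl | hs1'
      · linarith
      have hsS : x s < xm / 2 := by
        by_contra hcon
        push_neg at hcon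
        have : s ∈ S := ⟨ht0.trans hs1, hs2, hcon⟩
        have := le_csSup hSbdd this
        rw [← htc] at this
        linarith
      linarith
    have hynn : ∀ u, t ≤ u → u < T → 0 ≤ y u := by
      intro u hu1 hu2
      exact stays_nonneg hα hd hv₀ hsolR ht0 hu2 hu1
        (fun s hs => hxsmall s hs.1 (lt_of_le_of_lt hs.2 hu2)) hycon
    have hxmono : ∀ u, t ≤ u → u < T → x t ≤ x u := by
      intro u hu1 hu2
      rcases eq_or_lt_of_le hu1 with rfl | hu1'
      · exact le_refl _
      have hmono : MonotoneOn x (Set.Icc t u) := by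
        apply monotoneOn_of_deriv_nonneg (convex_Icc t u)
        · intro v hv
          exact ((hsolR v (ht0.trans hv.1) (lt_of_le_of_lt hv.2 hu2)).2.1).continuousAt.continuousWithinAt
        · intro v hv
          rw [interior_Icc] at hv
          exact ((hsolR v (ht0.trans hv.1.le) (lt_trans hv.2 hu2)).2.1).differentiableAt.differentiableWithinAt
        · intro v hv
          rw [interior_Icc] at hv
          rw [((hsolR v (ht0.trans hv.1.le) (lt_trans hv.2 hu2)).2.1).deriv]
          exact hynn v hv.1.le (lt_trans hv.2 hu2)
      exact hmono (Set.mem_Icc.mpr ⟨le_refl t, hu1⟩) (Set.mem_Icc.mpr ⟨hu1, le_refl u⟩) hu1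
    have : (0 : ℝ) ≥ x t := by
      apply ge_of_tendsto htendx
      filter_upwards [Ioo_mem_nhdsLT_of_mem (Set.mem_Ioc.mpr ⟨h2, le_refl T⟩)] with v hv
      exact hxmono v hv.1.le hv.2
    linarith
  refine ⟨hmain, ?_⟩
  have hevneg : ∀ᶠ u in 𝓝[<] T, y u ≤ 0 := by
    filter_upwards [Ioo_mem_nhdsLT_of_mem (Set.mem_Ioc.mpr ⟨htcT, le_refl T⟩)] with v hv
    exact (hmain v hv.1 hv.2).2.2.le
  have hbdd : Filter.IsBoundedUnder (· ≥ ·) (𝓝[<] T) y := by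
    refine ⟨-c₀, ?_⟩
    simp only [Filter.eventually_map]
    filter_upwards [Ioo_mem_nhdsLT_of_mem (Set.mem_Ioc.mpr ⟨hT, le_refl T⟩)] with v hv
    have := hybdd v hv.1.le hv.2
    rw [abs_le] at this
    linarith [this.1]
  exact Filter.limsup_le_of_le hbdd.isCoboundedUnder_le hevneg
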